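/- Under Assumption B1 with g′(1/2) > 2g(1/2), there exists δ₀ > 0 such that for all x with 0 < |η(x) − 1/2| < δ₀, we have |η̃(x) − 1/2| > |η(x) − 1/2|; i.e., label noise strictly amplifies the margin near the decision boundary. -/

import Mathlib

/-- Under Assumption B1 with `g′(1/2) > 2g(1/2)`, there exists `δ₀ > 0` such
that for all `x` with `0 < |η(x) − 1/2| < δ₀`, `|η̃(x) − 1/2| > |η(x) − 1/2|`. -/
theorem stmt10 {𝒳 : Type*} (η ηt ρ0 ρ1 : 𝒳 → ℝ)
    (hform : ∀ x, ηt x - 1/2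
      = (η x - 1/2) * (1 - ρ0 x - ρ1 x) + (1/2) * (ρ0 x - ρ1 x))
    (δ : ℝ) (hδ : 0 < δ) (g : ℝ → ℝ) (g' : ℝ)
    (hrange : ∀ t ∈ Set.Ioo ((1:ℝ)/2 - δ) (1/2 + δ), g t ∈ Set.Ico (0:ℝ) 1)
    (hderiv : HasDerivAt g g' (1/2))
    (hB1 : ∀ x, η x ∈ Set.Ioo ((1:ℝ)/2 - δ) (1/2 + δ) →
      ρ0 x = g (η x) ∧ ρ1 x = g (1 - η x))
    (hg : g' > 2 * g (1/2)) :
    ∃ δ₀ > 0, ∀ x, 0 < |η x - 1/2| → |η x - 1/2| < δ₀ →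
      |ηt x - 1/2| > |η x - 1/2| := by
  set r : ℝ → ℝ := fun t =>
    1 - g (1/2 + t) - g (1/2 - t) + (g (1/2 + t) - g (1/2 - t)) / (2 * t) with hr
  -- derivatives of shifted functions at 0
  have h1 : HasDerivAt (fun t : ℝ => g (1/2 + t)) g' 0 := by
    have hd : HasDerivAt g g' (1/2 + (0:ℝ)) := by simpa using hderiv
    have := hd.comp 0 ((hasDerivAt_id (0:ℝ)).const_add (1/2))
    simpa [Function.comp_def] using this
  have h2 : HasDerivAt (fun t : ℝ => g (1/2 - t)) (-g') 0 := by
    have hd : HasDerivAt g g' (1/2 - (0:ℝ)) := by simpa using hderiv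
    have := hd.comp 0 ((hasDerivAt_id (0:ℝ)).const_sub (1/2))
    simpa [Function.comp_def] using this
  have hA : Filter.Tendsto (fun t : ℝ => (g (1/2 + t) - g (1/2)) / t)
      (nhdsWithin 0 {(0:ℝ)}ᶜ) (nhds g') := by
    have := hasDerivAt_iff_tendsto_slope.mp h1
    refine this.congr' ?_
    filter_upwards [self_mem_nhdsWithin] with t ht
    simp [slope_def_field, div_eq_div_iff]
  have hB : Filter.Tendsto (fun t : ℝ => (g (1/2 - t) - g (1/2)) / t)
      (nhdsWithin 0 {(0:ℝ)}ᶜ) (nhds (-g')) := by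
    have := hasDerivAt_iff_tendsto_slope.mp h2
    refine this.congr' ?_
    filter_upwards [self_mem_nhdsWithin] with t ht
    simp [slope_def_field, div_eq_div_iff]
  have hcont1 : Filter.Tendsto (fun t : ℝ => g (1/2 + t))
      (nhdsWithin 0 {(0:ℝ)}ᶜ) (nhds (g (1/2))) := by
    have := h1.continuousAt.continuousWithinAt (s := {(0:ℝ)}ᶜ)
    simpa [ContinuousWithinAt] using this
  have hcont2 : Filter.Tendsto (fun t : ℝ => g (1/2 - t))
      (nhdsWithin 0 {(0:ℝ)}ᶜ) (nhds (g (1/2))) := by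
    have := h2.continuousAt.continuousWithinAt (s := {(0:ℝ)}ᶜ)
    simpa [ContinuousWithinAt] using this
  have hrt : Filter.Tendsto r (nhdsWithin 0 {(0:ℝ)}ᶜ)
      (nhds (1 - g (1/2) - g (1/2) + (g' - -g') / 2)) := by
    have := ((Filter.Tendsto.const_sub 1 hcont1).sub hcont2).add
      ((hA.sub hB).div_const 2)
    refine this.congr' ?_
    filter_upwards [self_mem_nhdsWithin] with t ht
    have ht' : (t : ℝ) ≠ 0 := ht
    simp only [hr]
    field_simp
    ring
  have hlim : (1:ℝ) < 1 - g (1/2) - g (1/2) + (g' - -g') / 2 := by linarith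
  have hev : ∀ᶠ t in nhdsWithin 0 {(0:ℝ)}ᶜ, 1 < r t ∧ |t| < δ := by
    have e1 : ∀ᶠ t in nhdsWithin 0 {(0:ℝ)}ᶜ, 1 < r t :=
      hrt.eventually (eventually_gt_nhds hlim)
    have e2 : ∀ᶠ t in nhdsWithin (0:ℝ) {(0:ℝ)}ᶜ, |t| < δ := by
      have : ∀ᶠ t in nhds (0:ℝ), |t| < δ := by
        have := Metric.ball_mem_nhds (0:ℝ) hδ
        filter_upwards [this] with t ht
        simpa [Real.dist_eq] using ht
      exact this.filter_mono nhdsWithin_le_nhds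
    exact e1.and e2
  rw [Filter.Eventually, Metric.mem_nhdsWithin_iff] at hev
  obtain ⟨ε, hε, hball⟩ := hev
  refine ⟨min ε δ, lt_min hε hδ, ?_⟩
  intro x hx0 hxlt
  have ht0 : η x - 1/2 ≠ 0 := abs_pos.mp hx0
  have htε : |η x - 1/2| < ε := lt_of_lt_of_le hxlt (min_le_left _ _)
  have htδ : |η x - 1/2| < δ := lt_of_lt_of_le hxlt (min_le_right _ _)
  obtain ⟨hl, hu⟩ := abs_lt.mp htδ
  have hmem : η x ∈ Set.Ioo ((1:ℝ)/2 - δ) (1/2 + δ) := ⟨by linarith, by linarith⟩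
  obtain ⟨hρ0, hρ1⟩ := hB1 x hmem
  have hrgt : 1 < r (η x - 1/2) :=
    (hball ⟨by simpa [Real.dist_eq] using htε, ht0⟩).1
  have e1 : (1:ℝ)/2 + (η x - 1/2) = η x := by ring
  have e2 : (1:ℝ)/2 - (η x - 1/2) = 1 - η x := by ring
  have key : ∀ (a b t : ℝ), t ≠ 0 →
      t * (1 - a - b + (a - b) / (2 * t)) = t * (1 - a - b) + 1/2 * (a - b) := by
    intro a b t ht
    field_simp
  have heq : ηt x - 1/2 = (η x - 1/2) * r (η x - 1/2) := by
    rw [hform x, hρ0, hρ1]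
    simp only [hr, e1, e2]
    linarith [key (g (η x)) (g (1 - η x)) (η x - 1/2) ht0]
  rw [heq, abs_mul, abs_of_pos (show (0:ℝ) < r (η x - 1/2) by linarith)]
  calc |η x - 1/2| = |η x - 1/2| * 1 := by ring
    _ < |η x - 1/2| * r (η x - 1/2) := (mul_lt_mul_iff_right₀ hx0).mpr hrgt
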